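/- Let L > 0 and suppose the grid values satisfy |u_{i+1,j} − u_{i,j}| ≤ L(x_{i+1} − x_i) for all 1 ≤ i ≤ N₁−1, 1 ≤ j ≤ N₂, and |u_{i,j+1} − u_{i,j}| ≤ L(y_{j+1} − y_j) for all 1 ≤ i ≤ N₁, 1 ≤ j ≤ N₂−1. Then the Type-1 piecewise linear function u_N is Lipschitz with modulus L with respect to the ℓ¹-norm on T, i.e., |u_N(x,y) − u_N(x′,y′)| ≤ L(|x − x′| + |y − y′|) for all (x,y), (x′,y′) ∈ T. (This is the characterization, stated in Remark 3.1(i) of the paper, of the Lipschitz continuity of the Type-1 approximation by the finite constraints on adjacent grid-value differences.) -/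

import Mathlib

open Finset Set
open scoped Classical

noncomputable section

/-- Lower-triangle linear piece of the Type-1 PLA over cell `(i,j)`. -/
def u1l (x y : ℕ → ℝ) (u : ℕ → ℕ → ℝ) (i j : ℕ) (p q : ℝ) : ℝ :=
  ((x (i + 1) - p) / (x (i + 1) - x i)) * u i j
    + ((p - x i) / (x (i + 1) - x i) - (q - y j) / (y (j + 1) - y j)) * u (i + 1) j
    + ((q - y j) / (y (j + 1) - y j)) * u (i + 1) (j + 1)

/-- Upper-triangle linear piece of the Type-1 PLA over cell `(i,j)`. -/
def u1u (x y : ℕ → ℝ) (u : ℕ → ℕ → ℝ) (i j : ℕ) (p q : ℝ) : ℝ :=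
  ((y (j + 1) - q) / (y (j + 1) - y j)) * u i j
    + ((q - y j) / (y (j + 1) - y j) - (p - x i) / (x (i + 1) - x i)) * u i (j + 1)
    + ((p - x i) / (x (i + 1) - x i)) * u (i + 1) (j + 1)

/-- Membership in the half-open interval `X_i` (closed at the left end for `i = 1`). -/
def memX (x : ℕ → ℝ) (i : ℕ) (p : ℝ) : Prop :=
  if i = 1 then x 1 ≤ p ∧ p ≤ x 2 else x i < p ∧ p ≤ x (i + 1)

/-- Membership in the cell `T_{i,j} = X_i × Y_j`. -/
def memCell (x y : ℕ → ℝ) (i j : ℕ) (p q : ℝ) : Prop :=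
  memX x i p ∧ memX y j q

/-- The Type-1 piecewise linear function built from the grid values `u i j`. -/
def uPL (N₁ N₂ : ℕ) (x y : ℕ → ℝ) (u : ℕ → ℕ → ℝ) (p q : ℝ) : ℝ :=
  ∑ i ∈ Finset.Icc 1 (N₁ - 1), ∑ j ∈ Finset.Icc 1 (N₂ - 1),
    if memCell x y i j p q then
      (if (q - y j) * (x (i + 1) - x i) ≤ (p - x i) * (y (j + 1) - y j)
        then u1l x y u i j p q else u1u x y u i j p q)
    else 0


/-- The value of the Type-1 PLA on cell `(i,j)`. -/
def gC (x y : ℕ → ℝ) (u : ℕ → ℕ → ℝ) (i j : ℕ) (p q : ℝ) : ℝ :=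
  if (q - y j) * (x (i + 1) - x i) ≤ (p - x i) * (y (j + 1) - y j)
    then u1l x y u i j p q else u1u x y u i j p q

lemma grid_mono {x : ℕ → ℝ} {N : ℕ} (hx : ∀ i, 1 ≤ i → i < N → x i < x (i + 1)) :
    ∀ a b, 1 ≤ a → a ≤ b → b ≤ N → x a ≤ x b := by
  intro a b ha hab
  induction b, hab using Nat.le_induction with
  | base => intro _; exact le_refl _
  | succ b hab ih =>
    intro hbN
    exact le_trans (ih (by omega)) (le_of_lt (hx b (by omega) (by omega)))

lemma memX_bounds {x : ℕ → ℝ} {i : ℕ} {p : ℝ} (h : memX x i p) :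
    x i ≤ p ∧ p ≤ x (i + 1) := by
  unfold memX at h
  split_ifs at h with h1
  · subst h1; exact ⟨h.1, h.2⟩
  · exact ⟨le_of_lt h.1, h.2⟩

lemma memX_unique {x : ℕ → ℝ} {N : ℕ} (hx : ∀ i, 1 ≤ i → i < N → x i < x (i + 1))
    {i i' : ℕ} (hi1 : 1 ≤ i) (hi2 : i ≤ N - 1) (hi1' : 1 ≤ i') (hi2' : i' ≤ N - 1)
    {p : ℝ} (h : memX x i p) (h' : memX x i' p) : i = i' := by
  have aux : ∀ a b : ℕ, 1 ≤ a → b ≤ N - 1 → a < b → memX x a p → memX x b p → False := by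
    intro a b ha hb hab hma hmb
    have hpa : p ≤ x (a + 1) := (memX_bounds hma).2
    have hxb : x b < p := by
      unfold memX at hmb
      rw [if_neg (by omega)] at hmb
      exact hmb.1
    have hmono : x (a + 1) ≤ x b := grid_mono hx (a + 1) b (by omega) (by omega) (by omega)
    linarith
  rcases lt_trichotomy i i' with hlt | he | hlt
  · exact absurd (aux i i' hi1 hi2' hlt h h') (by simp)
  · exact he
  · exact absurd (aux i' i hi1' hi2 hlt h' h) (by simp)

lemma exists_cell {x : ℕ → ℝ} :
    ∀ N, 2 ≤ N → (∀ i, 1 ≤ i → i < N → x i < x (i + 1)) →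
      ∀ p, x 1 ≤ p → p ≤ x N → ∃ i, 1 ≤ i ∧ i ≤ N - 1 ∧ memX x i p := by
  intro N
  induction N with
  | zero => intro h; omega
  | succ N ih =>
    intro hN hx p hp1 hpN
    by_cases hN2 : 2 ≤ N
    · by_cases hp : p ≤ x N
      · obtain ⟨i, h1, h2, h3⟩ := ih hN2 (fun i a b => hx i a (by omega)) p hp1 hp
        exact ⟨i, h1, by omega, h3⟩
      · refine ⟨N, by omega, by omega, ?_⟩
        unfold memX
        rw [if_neg (by omega)]
        exact ⟨lt_of_not_ge hp, hpN⟩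
    · have hN1 : N = 1 := by omega
      subst hN1
      refine ⟨1, le_refl _, by omega, ?_⟩
      unfold memX
      rw [if_pos rfl]
      exact ⟨hp1, hpN⟩

lemma uPL_eq {N₁ N₂ : ℕ} {x y : ℕ → ℝ} {u : ℕ → ℕ → ℝ}
    (hx : ∀ i, 1 ≤ i → i < N₁ → x i < x (i + 1))
    (hy : ∀ j, 1 ≤ j → j < N₂ → y j < y (j + 1))
    {i j : ℕ} (hi1 : 1 ≤ i) (hi2 : i ≤ N₁ - 1) (hj1 : 1 ≤ j) (hj2 : j ≤ N₂ - 1)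
    {p q : ℝ} (hc : memCell x y i j p q) :
    uPL N₁ N₂ x y u p q = gC x y u i j p q := by
  unfold uPL
  rw [Finset.sum_eq_single_of_mem i (Finset.mem_Icc.mpr ⟨hi1, hi2⟩)]
  · rw [Finset.sum_eq_single_of_mem j (Finset.mem_Icc.mpr ⟨hj1, hj2⟩)]
    · rw [if_pos hc]; rfl
    · intro b hb hbj
      rw [if_neg]
      intro hcb
      exact hbj (memX_unique hy (Finset.mem_Icc.mp hb).1 (Finset.mem_Icc.mp hb).2 hj1 hj2 hcb.2 hc.2)
  · intro b hb hbi
    refine Finset.sum_eq_zero fun c hcmem => ?_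
    rw [if_neg]
    intro hcb
    exact hbi (memX_unique hx (Finset.mem_Icc.mp hb).1 (Finset.mem_Icc.mp hb).2 hi1 hi2 hcb.1 hc.1)

lemma slope_bound {a Δ L : ℝ} (hΔ : 0 < Δ) (h : |a| ≤ L * Δ) : |a / Δ| ≤ L := by
  rw [abs_div, abs_of_pos hΔ, div_le_iff₀ hΔ]
  exact h

lemma affine_bound {A B L dp dq : ℝ} (hA : |A| ≤ L) (hB : |B| ≤ L) :
    |A * dp + B * dq| ≤ L * (|dp| + |dq|) := by
  calc |A * dp + B * dq| ≤ |A * dp| + |B * dq| := abs_add_le _ _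
    _ = |A| * |dp| + |B| * |dq| := by rw [abs_mul, abs_mul]
    _ ≤ L * |dp| + L * |dq| :=
        add_le_add (mul_le_mul_of_nonneg_right hA (abs_nonneg _))
          (mul_le_mul_of_nonneg_right hB (abs_nonneg _))
    _ = L * (|dp| + |dq|) := by ring

lemma u1l_lip {x y : ℕ → ℝ} {u : ℕ → ℕ → ℝ} {L : ℝ} {i j : ℕ}
    (hΔx : 0 < x (i + 1) - x i) (hΔy : 0 < y (j + 1) - y j)
    (hA : |u (i + 1) j - u i j| ≤ L * (x (i + 1) - x i))
    (hB : |u (i + 1) (j + 1) - u (i + 1) j| ≤ L * (y (j + 1) - y j))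
    (p q p' q' : ℝ) :
    |u1l x y u i j p q - u1l x y u i j p' q'| ≤ L * (|p - p'| + |q - q'|) := by
  have hx0 : x (i + 1) - x i ≠ 0 := ne_of_gt hΔx
  have hy0 : y (j + 1) - y j ≠ 0 := ne_of_gt hΔy
  have key : u1l x y u i j p q - u1l x y u i j p' q'
      = ((u (i + 1) j - u i j) / (x (i + 1) - x i)) * (p - p')
        + ((u (i + 1) (j + 1) - u (i + 1) j) / (y (j + 1) - y j)) * (q - q') := by
    unfold u1l; field_simp; ring
  rw [key]
  exact affine_bound (slope_bound hΔx hA) (slope_bound hΔy hB)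

lemma u1u_lip {x y : ℕ → ℝ} {u : ℕ → ℕ → ℝ} {L : ℝ} {i j : ℕ}
    (hΔx : 0 < x (i + 1) - x i) (hΔy : 0 < y (j + 1) - y j)
    (hC : |u i (j + 1) - u i j| ≤ L * (y (j + 1) - y j))
    (hD : |u (i + 1) (j + 1) - u i (j + 1)| ≤ L * (x (i + 1) - x i))
    (p q p' q' : ℝ) :
    |u1u x y u i j p q - u1u x y u i j p' q'| ≤ L * (|p - p'| + |q - q'|) := by
  have hx0 : x (i + 1) - x i ≠ 0 := ne_of_gt hΔx
  have hy0 : y (j + 1) - y j ≠ 0 := ne_of_gt hΔy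
  have key : u1u x y u i j p q - u1u x y u i j p' q'
      = ((u (i + 1) (j + 1) - u i (j + 1)) / (x (i + 1) - x i)) * (p - p')
        + ((u i (j + 1) - u i j) / (y (j + 1) - y j)) * (q - q') := by
    unfold u1u; field_simp; ring
  rw [key]
  exact affine_bound (slope_bound hΔx hD) (slope_bound hΔy hC)

lemma gC_lip {x y : ℕ → ℝ} {u : ℕ → ℕ → ℝ} {L : ℝ} {i j : ℕ}
    (hΔx : 0 < x (i + 1) - x i) (hΔy : 0 < y (j + 1) - y j)
    (hA : |u (i + 1) j - u i j| ≤ L * (x (i + 1) - x i))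
    (hB : |u (i + 1) (j + 1) - u (i + 1) j| ≤ L * (y (j + 1) - y j))
    (hC : |u i (j + 1) - u i j| ≤ L * (y (j + 1) - y j))
    (hD : |u (i + 1) (j + 1) - u i (j + 1)| ≤ L * (x (i + 1) - x i))
    (p q p' q' : ℝ) :
    |gC x y u i j p q - gC x y u i j p' q'| ≤ L * (|p - p'| + |q - q'|) := by
  have hx0 : x (i + 1) - x i ≠ 0 := ne_of_gt hΔx
  have hy0 : y (j + 1) - y j ≠ 0 := ne_of_gt hΔy
  have hl := u1l_lip hΔx hΔy hA hB p q p' q'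
  have hu := u1u_lip hΔx hΔy hC hD p q p' q'
  have key : ∀ r s : ℝ, u1l x y u i j r s - u1u x y u i j r s
      = ((r - x i) / (x (i + 1) - x i) - (s - y j) / (y (j + 1) - y j))
        * (u (i + 1) j + u i (j + 1) - u i j - u (i + 1) (j + 1)) := by
    intro r s; unfold u1l u1u; field_simp; ring
  have condpos : ∀ r s : ℝ, (s - y j) * (x (i + 1) - x i) ≤ (r - x i) * (y (j + 1) - y j) →
      0 ≤ (r - x i) / (x (i + 1) - x i) - (s - y j) / (y (j + 1) - y j) := by
    intro r s h
    rw [sub_nonneg, div_le_div_iff₀ hΔy hΔx]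
    exact h
  have condneg : ∀ r s : ℝ, ¬((s - y j) * (x (i + 1) - x i) ≤ (r - x i) * (y (j + 1) - y j)) →
      (r - x i) / (x (i + 1) - x i) - (s - y j) / (y (j + 1) - y j) ≤ 0 := by
    intro r s h
    rw [sub_nonpos, div_le_div_iff₀ hΔx hΔy]
    nlinarith [lt_of_not_ge h]
  rcases le_or_gt 0 (u (i + 1) j + u i (j + 1) - u i j - u (i + 1) (j + 1)) with hDD | hDD
  · have hmax : ∀ r s : ℝ, gC x y u i j r s = max (u1l x y u i j r s) (u1u x y u i j r s) := by
      intro r s; unfold gC; split_ifs with h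
      · have h2 := mul_nonneg (condpos r s h) hDD
        exact (max_eq_left (by linarith [key r s])).symm
      · have h2 : (r - x i) / (x (i + 1) - x i) - (s - y j) / (y (j + 1) - y j) ≤ 0 :=
          condneg r s h
        have h3 := mul_nonneg (neg_nonneg.mpr h2) hDD
        exact (max_eq_right (by nlinarith [key r s])).symm
    rw [hmax, hmax]
    exact le_trans (abs_max_sub_max_le_max _ _ _ _) (max_le hl hu)
  · have hDD' : 0 ≤ -(u (i + 1) j + u i (j + 1) - u i j - u (i + 1) (j + 1)) := by linarith
    have hmin : ∀ r s : ℝ, gC x y u i j r s = min (u1l x y u i j r s) (u1u x y u i j r s) := by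
      intro r s; unfold gC; split_ifs with h
      · have h2 := mul_nonneg (condpos r s h) hDD'
        exact (min_eq_left (by nlinarith [key r s])).symm
      · have h2 := mul_nonneg (neg_nonneg.mpr (condneg r s h)) hDD'
        exact (min_eq_right (by nlinarith [key r s])).symm
    rw [hmin, hmin]
    exact le_trans (abs_min_sub_min_le_max _ _ _ _) (max_le hl hu)


lemma edge_x {x y : ℕ → ℝ} {u : ℕ → ℕ → ℝ} {i j : ℕ}
    (hΔx : 0 < x (i + 1) - x i) (hΔx' : 0 < x (i + 1 + 1) - x (i + 1))
    (hΔy : 0 < y (j + 1) - y j) {q : ℝ} (hq1 : y j ≤ q) (hq2 : q ≤ y (j + 1)) :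
    gC x y u i j (x (i + 1)) q = gC x y u (i + 1) j (x (i + 1)) q := by
  have hx0 : x (i + 1) - x i ≠ 0 := ne_of_gt hΔx
  have hx0' : x (i + 1 + 1) - x (i + 1) ≠ 0 := ne_of_gt hΔx'
  have hy0 : y (j + 1) - y j ≠ 0 := ne_of_gt hΔy
  unfold gC
  rcases eq_or_lt_of_le hq1 with he | hlt
  · rw [if_pos (by nlinarith), if_pos (by nlinarith)]
    unfold u1l
    rw [← he]
    field_simp
    ring
  · rw [if_pos (by nlinarith), if_neg (by nlinarith)]
    unfold u1l u1u
    field_simp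
    ring

lemma edge_y {x y : ℕ → ℝ} {u : ℕ → ℕ → ℝ} {i j : ℕ}
    (hΔx : 0 < x (i + 1) - x i)
    (hΔy : 0 < y (j + 1) - y j) (hΔy' : 0 < y (j + 1 + 1) - y (j + 1))
    {p : ℝ} (hp1 : x i ≤ p) (hp2 : p ≤ x (i + 1)) :
    gC x y u i j p (y (j + 1)) = gC x y u i (j + 1) p (y (j + 1)) := by
  have hx0 : x (i + 1) - x i ≠ 0 := ne_of_gt hΔx
  have hy0 : y (j + 1) - y j ≠ 0 := ne_of_gt hΔy
  have hy0' : y (j + 1 + 1) - y (j + 1) ≠ 0 := ne_of_gt hΔy'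
  unfold gC
  rcases eq_or_lt_of_le hp2 with he | hlt
  · rw [if_pos (by nlinarith), if_pos (by nlinarith)]
    unfold u1l
    rw [he]
    field_simp
    ring
  · rw [if_neg (by nlinarith), if_pos (by nlinarith)]
    unfold u1u u1l
    field_simp
    ring


lemma horiz {N₁ N₂ : ℕ} {x y : ℕ → ℝ} {u : ℕ → ℕ → ℝ} {L : ℝ}
    (hx : ∀ i, 1 ≤ i → i < N₁ → x i < x (i + 1))
    (hy : ∀ j, 1 ≤ j → j < N₂ → y j < y (j + 1))
    (hlip₁ : ∀ i j, 1 ≤ i → i < N₁ → 1 ≤ j → j ≤ N₂ →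
      |u (i + 1) j - u i j| ≤ L * (x (i + 1) - x i))
    (hlip₂ : ∀ i j, 1 ≤ i → i ≤ N₁ → 1 ≤ j → j < N₂ →
      |u i (j + 1) - u i j| ≤ L * (y (j + 1) - y j))
    {j : ℕ} (hj1 : 1 ≤ j) (hj2 : j ≤ N₂ - 1) (hN₂ : 2 ≤ N₂) :
    ∀ n i i', i' - i = n → 1 ≤ i → i ≤ i' → i' ≤ N₁ - 1 →
      ∀ p p' q, x i ≤ p → p ≤ x (i + 1) → x i' ≤ p' → p' ≤ x (i' + 1) →
        y j ≤ q → q ≤ y (j + 1) →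
        |gC x y u i j p q - gC x y u i' j p' q| ≤ L * |p - p'| := by
  have glip : ∀ i, 1 ≤ i → i ≤ N₁ - 1 → ∀ p q p' q',
      |gC x y u i j p q - gC x y u i j p' q'| ≤ L * (|p - p'| + |q - q'|) := by
    intro i h1 h2
    exact gC_lip (sub_pos.mpr (hx i h1 (by omega))) (sub_pos.mpr (hy j hj1 (by omega)))
      (hlip₁ i j h1 (by omega) hj1 (by omega))
      (hlip₂ (i + 1) j (by omega) (by omega) hj1 (by omega))
      (hlip₂ i j h1 (by omega) hj1 (by omega))
      (hlip₁ i (j + 1) h1 (by omega) (by omega) (by omega))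
  intro n
  induction n with
  | zero =>
    intro i i' hn hi hii hi' p p' q hp1 hp2 hp1' hp2' hq1 hq2
    have : i' = i := by omega
    subst this
    simpa using glip i' hi hi' p q p' q
  | succ n ih =>
    intro i i' hn hi hii hi' p p' q hp1 hp2 hp1' hp2' hq1 hq2
    have hii2 : i < i' := by omega
    have hi1N : i + 1 ≤ N₁ - 1 := by omega
    have h1 : |gC x y u i j p q - gC x y u i j (x (i + 1)) q| ≤ L * (x (i + 1) - p) := by
      have := glip i hi (by omega) p q (x (i + 1)) q
      simpa [abs_of_nonpos (by linarith : p - x (i + 1) ≤ 0)] using this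
    have hedge : gC x y u i j (x (i + 1)) q = gC x y u (i + 1) j (x (i + 1)) q :=
      edge_x (sub_pos.mpr (hx i hi (by omega))) (sub_pos.mpr (hx (i + 1) (by omega) (by omega)))
        (sub_pos.mpr (hy j hj1 (by omega))) hq1 hq2
    have h2 : |gC x y u (i + 1) j (x (i + 1)) q - gC x y u i' j p' q| ≤ L * |x (i + 1) - p'| :=
      ih (i + 1) i' (by omega) (by omega) (by omega) hi' (x (i + 1)) p' q le_rfl
        (le_of_lt (hx (i + 1) (by omega) (by omega))) hp1' hp2' hq1 hq2
    have horder : x (i + 1) ≤ p' :=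
      le_trans (grid_mono hx (i + 1) i' (by omega) (by omega) (by omega)) hp1'
    calc |gC x y u i j p q - gC x y u i' j p' q|
        ≤ |gC x y u i j p q - gC x y u i j (x (i + 1)) q|
          + |gC x y u (i + 1) j (x (i + 1)) q - gC x y u i' j p' q| := by
          rw [← hedge]; exact abs_sub_le _ _ _
      _ ≤ L * (x (i + 1) - p) + L * |x (i + 1) - p'| := add_le_add h1 h2
      _ = L * (x (i + 1) - p) + L * (p' - x (i + 1)) := by
          rw [abs_of_nonpos (by linarith : x (i + 1) - p' ≤ 0)]; ring
      _ = L * (p' - p) := by ring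
      _ = L * |p - p'| := by rw [abs_of_nonpos (by linarith : p - p' ≤ 0)]; ring

lemma vert {N₁ N₂ : ℕ} {x y : ℕ → ℝ} {u : ℕ → ℕ → ℝ} {L : ℝ}
    (hx : ∀ i, 1 ≤ i → i < N₁ → x i < x (i + 1))
    (hy : ∀ j, 1 ≤ j → j < N₂ → y j < y (j + 1))
    (hlip₁ : ∀ i j, 1 ≤ i → i < N₁ → 1 ≤ j → j ≤ N₂ →
      |u (i + 1) j - u i j| ≤ L * (x (i + 1) - x i))
    (hlip₂ : ∀ i j, 1 ≤ i → i ≤ N₁ → 1 ≤ j → j < N₂ →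
      |u i (j + 1) - u i j| ≤ L * (y (j + 1) - y j))
    {i : ℕ} (hi1 : 1 ≤ i) (hi2 : i ≤ N₁ - 1) (hN₁ : 2 ≤ N₁) :
    ∀ n j j', j' - j = n → 1 ≤ j → j ≤ j' → j' ≤ N₂ - 1 →
      ∀ q q' p, y j ≤ q → q ≤ y (j + 1) → y j' ≤ q' → q' ≤ y (j' + 1) →
        x i ≤ p → p ≤ x (i + 1) →
        |gC x y u i j p q - gC x y u i j' p q'| ≤ L * |q - q'| := by
  have glip : ∀ j, 1 ≤ j → j ≤ N₂ - 1 → ∀ p q p' q',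
      |gC x y u i j p q - gC x y u i j p' q'| ≤ L * (|p - p'| + |q - q'|) := by
    intro j h1 h2
    exact gC_lip (sub_pos.mpr (hx i hi1 (by omega))) (sub_pos.mpr (hy j h1 (by omega)))
      (hlip₁ i j hi1 (by omega) h1 (by omega))
      (hlip₂ (i + 1) j (by omega) (by omega) h1 (by omega))
      (hlip₂ i j hi1 (by omega) h1 (by omega))
      (hlip₁ i (j + 1) hi1 (by omega) (by omega) (by omega))
  intro n
  induction n with
  | zero =>
    intro j j' hn hj hjj hj' q q' p hq1 hq2 hq1' hq2' hp1 hp2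
    have : j' = j := by omega
    subst this
    simpa using glip j' hj hj' p q p q'
  | succ n ih =>
    intro j j' hn hj hjj hj' q q' p hq1 hq2 hq1' hq2' hp1 hp2
    have hjj2 : j < j' := by omega
    have h1 : |gC x y u i j p q - gC x y u i j p (y (j + 1))| ≤ L * (y (j + 1) - q) := by
      have := glip j hj (by omega) p q p (y (j + 1))
      simpa [abs_of_nonpos (by linarith : q - y (j + 1) ≤ 0)] using this
    have hedge : gC x y u i j p (y (j + 1)) = gC x y u i (j + 1) p (y (j + 1)) :=
      edge_y (sub_pos.mpr (hx i hi1 (by omega))) (sub_pos.mpr (hy j hj (by omega)))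
        (sub_pos.mpr (hy (j + 1) (by omega) (by omega))) hp1 hp2
    have h2 : |gC x y u i (j + 1) p (y (j + 1)) - gC x y u i j' p q'| ≤ L * |y (j + 1) - q'| :=
      ih (j + 1) j' (by omega) (by omega) (by omega) hj' (y (j + 1)) q' p le_rfl
        (le_of_lt (hy (j + 1) (by omega) (by omega))) hq1' hq2' hp1 hp2
    have horder : y (j + 1) ≤ q' :=
      le_trans (grid_mono hy (j + 1) j' (by omega) (by omega) (by omega)) hq1'
    calc |gC x y u i j p q - gC x y u i j' p q'|
        ≤ |gC x y u i j p q - gC x y u i j p (y (j + 1))|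
          + |gC x y u i (j + 1) p (y (j + 1)) - gC x y u i j' p q'| := by
          rw [← hedge]; exact abs_sub_le _ _ _
      _ ≤ L * (y (j + 1) - q) + L * |y (j + 1) - q'| := add_le_add h1 h2
      _ = L * (y (j + 1) - q) + L * (q' - y (j + 1)) := by
          rw [abs_of_nonpos (by linarith : y (j + 1) - q' ≤ 0)]; ring
      _ = L * (q' - q) := by ring
      _ = L * |q - q'| := by rw [abs_of_nonpos (by linarith : q - q' ≤ 0)]; ring


/-- The discrete Lipschitz constraints on adjacent grid-value differences imply that the Type-1
piecewise linear function is Lipschitz with modulus `L` for the ℓ¹-norm on `T`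
(Remark 3.1(i) of the paper). -/
theorem type1_PLA_lipschitz
    (N₁ N₂ : ℕ) (hN₁ : 2 ≤ N₁) (hN₂ : 2 ≤ N₂)
    (x y : ℕ → ℝ)
    (hx : ∀ i, 1 ≤ i → i < N₁ → x i < x (i + 1))
    (hy : ∀ j, 1 ≤ j → j < N₂ → y j < y (j + 1))
    (L : ℝ) (hL : 0 < L)
    (u : ℕ → ℕ → ℝ)
    (hlip₁ : ∀ i j, 1 ≤ i → i < N₁ → 1 ≤ j → j ≤ N₂ →
      |u (i + 1) j - u i j| ≤ L * (x (i + 1) - x i))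
    (hlip₂ : ∀ i j, 1 ≤ i → i ≤ N₁ → 1 ≤ j → j < N₂ →
      |u i (j + 1) - u i j| ≤ L * (y (j + 1) - y j)) :
    ∀ p p' q q', p ∈ Set.Icc (x 1) (x N₁) → p' ∈ Set.Icc (x 1) (x N₁) →
      q ∈ Set.Icc (y 1) (y N₂) → q' ∈ Set.Icc (y 1) (y N₂) →
      |uPL N₁ N₂ x y u p q - uPL N₁ N₂ x y u p' q'| ≤ L * (|p - p'| + |q - q'|) := by
  intro p p' q q' hp hp' hq hq'
  obtain ⟨i, hi1, hi2, hmi⟩ := exists_cell N₁ hN₁ hx p hp.1 hp.2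
  obtain ⟨i', hi1', hi2', hmi'⟩ := exists_cell N₁ hN₁ hx p' hp'.1 hp'.2
  obtain ⟨j, hj1, hj2, hmj⟩ := exists_cell N₂ hN₂ hy q hq.1 hq.2
  obtain ⟨j', hj1', hj2', hmj'⟩ := exists_cell N₂ hN₂ hy q' hq'.1 hq'.2
  have e1 : uPL N₁ N₂ x y u p q = gC x y u i j p q :=
    uPL_eq hx hy hi1 hi2 hj1 hj2 ⟨hmi, hmj⟩
  have e2 : uPL N₁ N₂ x y u p' q' = gC x y u i' j' p' q' :=
    uPL_eq hx hy hi1' hi2' hj1' hj2' ⟨hmi', hmj'⟩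
  obtain ⟨hpi1, hpi2⟩ := memX_bounds hmi
  obtain ⟨hpi1', hpi2'⟩ := memX_bounds hmi'
  obtain ⟨hqj1, hqj2⟩ := memX_bounds hmj
  obtain ⟨hqj1', hqj2'⟩ := memX_bounds hmj'
  have hH : |gC x y u i j p q - gC x y u i' j p' q| ≤ L * |p - p'| := by
    rcases le_total i i' with h | h
    · exact horiz hx hy hlip₁ hlip₂ hj1 hj2 hN₂ (i' - i) i i' rfl hi1 h hi2'
        p p' q hpi1 hpi2 hpi1' hpi2' hqj1 hqj2
    · have := horiz hx hy hlip₁ hlip₂ hj1 hj2 hN₂ (i - i') i' i rfl hi1' h hi2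
        p' p q hpi1' hpi2' hpi1 hpi2 hqj1 hqj2
      rw [abs_sub_comm, abs_sub_comm p' p] at this
      exact this
  have hV : |gC x y u i' j p' q - gC x y u i' j' p' q'| ≤ L * |q - q'| := by
    rcases le_total j j' with h | h
    · exact vert hx hy hlip₁ hlip₂ hi1' hi2' hN₁ (j' - j) j j' rfl hj1 h hj2'
        q q' p' hqj1 hqj2 hqj1' hqj2' hpi1' hpi2'
    · have := vert hx hy hlip₁ hlip₂ hi1' hi2' hN₁ (j - j') j' j rfl hj1' h hj2
        q' q p' hqj1' hqj2' hqj1 hqj2 hpi1' hpi2'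
      rw [abs_sub_comm, abs_sub_comm q' q] at this
      exact this
  calc |uPL N₁ N₂ x y u p q - uPL N₁ N₂ x y u p' q'|
      = |gC x y u i j p q - gC x y u i' j' p' q'| := by rw [e1, e2]
    _ ≤ |gC x y u i j p q - gC x y u i' j p' q|
        + |gC x y u i' j p' q - gC x y u i' j' p' q'| := abs_sub_le _ _ _
    _ ≤ L * |p - p'| + L * |q - q'| := add_le_add hH hV
    _ = L * (|p - p'| + |q - q'|) := by ring

end
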